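/- The reflection π : Cat ⥤ Gpd of categories into groupoids can be computed by a coinverter: for a category A, the unit component η_A : A ⥤ π(A) is the universal functor inverting the canonical natural transformation μ_A : d₀ ⟶ d₁ between the domain and codomain projections of the arrow category A ↓ A. That is, η_A composed with μ_A is a natural isomorphism, and any functor g : A ⥤ X such that whiskering μ_A with g yields a natural isomorphism factors uniquely through η_A. -/

import Mathlib

open CategoryTheory

universe v₁ v₂ u₁ u₂

/-- The canonical natural transformation `μ_A : d₀ ⟶ d₁` between the domain and codomain
projections of the arrow category `A ↓ A`, whose component at an arrow `α` is `α` itself. -/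
def muA (A : Type u₁) [Category.{v₁} A] :
    (Arrow.leftFunc : Arrow A ⥤ A) ⟶ Arrow.rightFunc where
  app α := α.hom
  naturality _ _ f := Arrow.w f

noncomputable instance locGrpd (A : Type u₁) [Category.{v₁} A] :
    Groupoid ((⊤ : MorphismProperty A).Localization) := by
  apply Groupoid.ofIsIso
  intro X Y f
  have : (MorphismProperty.isomorphisms ((⊤ : MorphismProperty A).Localization)) = ⊤ := by
    apply Localization.Construction.morphismProperty_eq_top'
    · intro X Y f
      exact (⊤ : MorphismProperty A).Q_inverts f trivial
    · intro X Y e he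
      exact inferInstanceAs (IsIso e.inv)
  have hf : MorphismProperty.isomorphisms ((⊤ : MorphismProperty A).Localization) f := by
    rw [this]; trivial
  exact hf

/-- The reflection of categories into groupoids is computed by a coinverter: there is a
groupoid `G` and a functor `η_A : A ⥤ G` such that `η_A` inverts `μ_A` and any functor
`g : A ⥤ X` inverting `μ_A` factors uniquely through `η_A`. -/
theorem stmt15 (A : Type u₁) [Category.{v₁} A] :
    ∃ (G : Grpd.{max u₁ v₁, u₁}) (η : A ⥤ G),
      IsIso (Functor.whiskerRight (muA A) η) ∧
      ∀ {X : Type u₂} [Category.{v₂} X] (g : A ⥤ X),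
        IsIso (Functor.whiskerRight (muA A) g) → ∃! g' : G ⥤ X, η ⋙ g' = g := by
  refine ⟨Grpd.of ((⊤ : MorphismProperty A).Localization), (⊤ : MorphismProperty A).Q, ?_, ?_⟩
  · exact NatIso.isIso_of_isIso_app _
  · intro X _ g hg
    have hinv : (⊤ : MorphismProperty A).IsInvertedBy g := by
      intro x y f _
      have := NatIso.isIso_app_of_isIso (Functor.whiskerRight (muA A) g) (Arrow.mk f)
      exact this
    refine ⟨Localization.Construction.lift g hinv,
      Localization.Construction.fac g hinv, ?_⟩
    intro g' hg'
    exact Localization.Construction.uniq _ _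
      (by exact hg'.trans (Localization.Construction.fac g hinv).symm)
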